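/- arXiv:1504.02075 — 3 statements merged into one kernel-verified Lean document; each statement's English description precedes it below -/
import Mathlib

section
/- For coprime positive integers m and n, the rational Catalan number (1/(m+n)) * binomial(m+n, m) is an integer, and equals (m+n-1)!/(m! * n!). -/
open Nat

/-- Number of north steps among the first `i` steps of the path `P`
(`true` = north step `N`, `false` = east step `E`). -/
def nSteps (P : List Bool) (i : ℕ) : ℕ := (P.take i).count true

/-- Number of east steps among the first `i` steps. -/
def eSteps (P : List Bool) (i : ℕ) : ℕ := (P.take i).count false

/-- Rank `m*b - n*a` of the `i`-th lattice point `(a,b)` of the path. -/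
def rank (m n : ℕ) (P : List Bool) (i : ℕ) : ℤ :=
  (m : ℤ) * nSteps P i - (n : ℤ) * eSteps P i

/-- A lattice path from `(0,0)` to `(m,n)`: `m+n` unit steps, `n` of them north. -/
def IsPath (m n : ℕ) (P : List Bool) : Prop :=
  P.length = m + n ∧ P.count true = n

/-- An `(m,n)`-Dyck path: a path staying weakly above the diagonal,
equivalently with all ranks nonnegative. -/
def IsDyck (m n : ℕ) (P : List Bool) : Prop :=
  IsPath m n P ∧ ∀ i ≤ m + n, 0 ≤ rank m n P i

/-- The set of ranks of the first `m+n` lattice points of the path. -/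
def rankSet (m n : ℕ) (P : List Bool) : Finset ℤ :=
  (Finset.range (m + n)).image (rank m n P)

/-- Ranks of south ends (starting points of north steps). -/
def southRanks (m n : ℕ) (P : List Bool) : Finset ℤ :=
  ((Finset.range (m + n)).filter (fun i => P.getD i false = true)).image (rank m n P)

/-- Ranks of west ends (starting points of east steps). -/
def westRanks (m n : ℕ) (P : List Bool) : Finset ℤ :=
  ((Finset.range (m + n)).filter (fun i => P.getD i true = false)).image (rank m n P)

/-- Transpose of a path: reverse the word and exchange `N` and `E`. -/
def transpose (P : List Bool) : List Bool := (P.map (fun b => !b)).reverse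

/-- `D'` is the rank complement of `D`: its rank set is `M - r(D)`
where `M` is the maximum rank of `D`. -/
def IsRankComplement (m n : ℕ) (D D' : List Bool) : Prop :=
  ∃ M : ℤ, IsGreatest (↑(rankSet m n D) : Set ℤ) M ∧
    rankSet m n D' = (rankSet m n D).image (fun r => M - r)

/-- A partition, encoded as a weakly decreasing list of positive integers. -/
def IsPartition (L : List ℕ) : Prop :=
  L.Pairwise (· ≥ ·) ∧ ∀ x ∈ L, 0 < x

/-- Hook length of the cell in (0-based) row `i`, column `j`. -/
def hook (L : List ℕ) (i j : ℕ) : ℕ :=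
  L.getD i 0 - j + (L.drop (i + 1)).countP (fun x => decide (j < x))

/-- `L` is an `n`-core: no hook length is divisible by `n`. -/
def IsCore (n : ℕ) (L : List ℕ) : Prop :=
  ∀ i < L.length, ∀ j < L.getD i 0, ¬ (n ∣ hook L i j)

/-- The set of first-column hook lengths of `L`. -/
def firstColHooks (L : List ℕ) : Finset ℕ :=
  (Finset.range L.length).image (fun i => hook L i 0)

/-- Conjugate (transpose) partition. -/
def conjugate (L : List ℕ) : List ℕ :=
  (List.range (L.getD 0 0)).map (fun j => L.countP (fun x => decide (j < x)))

/-- `H` is `n`-flush: no element is a multiple of `n`, and it is closed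
under subtracting `n` while staying positive. -/
def IsFlush (n : ℕ) (H : Finset ℕ) : Prop :=
  (∀ h ∈ H, ¬ (n ∣ h)) ∧ ∀ h ∈ H, n < h → h - n ∈ H

/-- `s_i^n(H)`: the maximum of `((n+H) ∪ {i}) ∩ (i + nℤ)`. -/
def sFun (n : ℕ) (H : Finset ℕ) (i : ℕ) : ℕ :=
  (insert i ((H.filter (fun h => h % n = i % n)).image (fun h => h + n))).max'
    (Finset.insert_nonempty _ _)

/-- `S^n(H) = {s_0, ..., s_{n-1}}`. -/
def sSet (n : ℕ) (H : Finset ℕ) : Finset ℕ := (Finset.range n).image (sFun n H)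

/-- The lattice point `(a,b)` lies strictly to the right of the path `D`
inside the `m × n` rectangle: every lattice point of `D` at height `b`
has `x`-coordinate less than `a`. -/
def StrictlyRightOf (m n : ℕ) (D : List Bool) (a b : ℕ) : Prop :=
  a ≤ m ∧ b ≤ n ∧ ∀ i ≤ m + n, (D.take i).count true = b → (D.take i).count false < a

/-- The positive ranks of lattice points lying strictly to the right of `D`. -/
def andersonSet (m n : ℕ) (D : List Bool) : Set ℕ :=
  {h | 0 < h ∧ ∃ a b : ℕ, StrictlyRightOf m n D a b ∧ (h : ℤ) = (m : ℤ) * b - (n : ℤ) * a}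

/-- The `x`-coordinate of the vertical step of `D` at height `y`
(the number of east steps taken at heights `≤ y`). -/
def southX (D : List Bool) (y : ℕ) : ℕ :=
  (List.range D.length).countP
    (fun i => decide (D.getD i true = false ∧ (D.take i).count true ≤ y))

/-- The partition formed by the cells above the path `D`
inside a rectangle of height `n`. -/
def pathPartition (n : ℕ) (D : List Bool) : List ℕ :=
  (((List.range n).reverse).map (fun y => southX D y)).filter (fun x => decide (0 < x))

/-- Arm of the cell `(i,j)` of `L`. -/
def armL (L : List ℕ) (i j : ℕ) : ℕ := L.getD i 0 - (j + 1)

/-- Leg of the cell `(i,j)` of `L`. -/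
def legL (L : List ℕ) (i j : ℕ) : ℕ := (L.drop (i + 1)).countP (fun x => decide (j < x))

/-- The dinv statistic of an `(m,n)`-Dyck path: the number of cells `c` of the
partition above the path with `arm(c)/(leg(c)+1) ≤ m/n < (arm(c)+1)/leg(c)`. -/
def dinv (m n : ℕ) (D : List Bool) : ℕ :=
  ((Finset.range (pathPartition n D).length ×ˢ Finset.range m).filter
    (fun p => p.2 < (pathPartition n D).getD p.1 0 ∧
      armL (pathPartition n D) p.1 p.2 * n ≤ m * (legL (pathPartition n D) p.1 p.2 + 1) ∧
      m * legL (pathPartition n D) p.1 p.2 < n * (armL (pathPartition n D) p.1 p.2 + 1))).card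

/-- `codinv(D) = #{(r_s, r_w) : r_s ∈ S(D), r_w ∈ W(D), r_s < r_w}`. -/
def codinv (m n : ℕ) (D : List Bool) : ℕ :=
  ((southRanks m n D ×ˢ westRanks m n D).filter (fun p => p.1 < p.2)).card

/-- The skew length of an `(m,n)`-core: the number of cells lying both in an
`n`-row (a row `i` with `h_i + n ∈ S^n(H_λ)`) and in the `m`-boundary
(hook length `< m`). -/
def skewLength (m n : ℕ) (L : List ℕ) : ℕ :=
  ((Finset.range L.length ×ˢ Finset.range (L.headD 0)).filter
    (fun p => p.2 < L.getD p.1 0 ∧ hook L p.1 p.2 < m ∧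
      hook L p.1 0 + n ∈ sSet n (firstColHooks L))).card
/-- For coprime positive integers `m` and `n`, `m+n` divides
`binomial(m+n, m)`, and the rational Catalan number
`binomial(m+n,m)/(m+n)` equals `(m+n-1)!/(m! * n!)`. -/
theorem rational_catalan_integer (m n : ℕ) (hm : 0 < m) (hn : 0 < n)
    (hco : Nat.Coprime m n) :
    (m + n) ∣ (m + n).choose m ∧
      (m + n).choose m / (m + n) = (m + n - 1)! / (m ! * n !) := by

  have hmn : 0 < m + n := by omega
  have h := Nat.add_one_mul_choose_eq (m + n - 1) (m - 1)
  have h1 : m + n - 1 + 1 = m + n := by omega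
  have h2 : m - 1 + 1 = m := by omega
  rw [h1, h2] at h
  have hco' : Nat.Coprime (m + n) m := by
    have : Nat.Coprime m (m + n) := by
      simpa using (Nat.coprime_add_self_right (m := m) (n := n)).mpr hco
    exact this.symm
  have hdvd : (m + n) ∣ (m + n).choose m :=
    hco'.dvd_of_dvd_mul_right ⟨_, h.symm⟩
  refine ⟨hdvd, ?_⟩
  obtain ⟨k, hk⟩ := hdvd
  have hfac : (m + n).choose m * m ! * n ! = (m + n)! := by
    have := Nat.choose_mul_factorial_mul_factorial (Nat.le_add_right m n)
    simpa using this
  have h3 : (m + n)! = (m + n) * (m + n - 1)! := by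
    conv_lhs => rw [show m + n = (m + n - 1) + 1 by omega]
    rw [Nat.factorial_succ, Nat.sub_add_cancel hmn]
  have hkey : k * (m ! * n !) = (m + n - 1)! := by
    apply Nat.eq_of_mul_eq_mul_left hmn
    calc (m + n) * (k * (m ! * n !)) = ((m + n) * k) * m ! * n ! := by ring
    _ = (m + n).choose m * m ! * n ! := by rw [← hk]
    _ = (m + n) * (m + n - 1)! := by rw [hfac, h3]
  rw [hk, Nat.mul_div_cancel_left k hmn,
    Nat.div_eq_of_eq_mul_left (Nat.mul_pos (Nat.factorial_pos m) (Nat.factorial_pos n)) hkey.symm]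
end

section
/- Let m, n be coprime positive integers and let D be an (m,n)-Dyck path with rank set R and maximum rank M = max R. Then the set M - R = {M - r : r ∈ R} is the rank set of an (m,n)-Dyck path (the rank complement of D). -/
open Nat

lemma count_take_drop (c : Bool) (D : List Bool) (j : ℕ) :
    (D.take j).count c + (D.drop j).count c = D.count c := by
  rw [← List.count_append, List.take_append_drop]

lemma count_take_rev (c : Bool) (A : List Bool) (i : ℕ) :
    (A.reverse.take i).count c + (A.take (A.length - i)).count c = A.count c := by
  rw [List.take_reverse, List.count_reverse, Nat.add_comm]
  exact count_take_drop c A (A.length - i)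

lemma count_bool_len (l : List Bool) : l.count true + l.count false = l.length := by
  induction l with
  | nil => simp
  | cons h t ih => cases h <;> simp [List.count_cons] <;> omega

lemma cleft (c : Bool) (D : List Bool) (k i : ℕ) (hk : k ≤ D.length) (hi : i ≤ k) :
    (((D.take k).reverse ++ (D.drop k).reverse).take i).count c + (D.take (k - i)).count c
      = (D.take k).count c := by
  rw [List.take_append_of_le_length (by simp; omega)]
  have h := count_take_rev c (D.take k) i
  rw [List.length_take, Nat.min_eq_left hk, List.take_take,
    Nat.min_eq_left (by omega : k - i ≤ k)] at h
  exact h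

lemma cright (c : Bool) (D : List Bool) (k i : ℕ) (hk : k ≤ i) (hi : i ≤ D.length) :
    (((D.take k).reverse ++ (D.drop k).reverse).take i).count c
        + (D.take (D.length - i + k)).count c
      = D.count c + (D.take k).count c := by
  have hA : ((D.take k).reverse).take i = (D.take k).reverse :=
    List.take_of_length_le (by simp; omega)
  rw [List.take_append, hA, List.count_append, List.count_reverse,
    List.length_reverse, List.length_take, Nat.min_eq_left (le_trans hk hi)]
  have h := count_take_rev c (D.drop k) (i - k)
  rw [List.length_drop] at h
  have hdl : D.length - k - (i - k) = D.length - i := by omega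
  rw [hdl] at h
  have h2 : D.take (D.length - i + k) = D.take k ++ (D.drop k).take (D.length - i) := by
    rw [Nat.add_comm]; exact List.take_add (l := D) (i := k) (j := D.length - i)
  rw [h2, List.count_append]
  have h3 := count_take_drop c D k
  omega

lemma rank_comp_left (m n k i : ℕ) (D : List Bool) (hk : k ≤ D.length) (hi : i ≤ k) :
    rank m n ((D.take k).reverse ++ (D.drop k).reverse) i
      = rank m n D k - rank m n D (k - i) := by
  have h1 := cleft true D k i hk hi
  have h2 := cleft false D k i hk hi
  simp only [rank, nSteps, eSteps]
  push_cast [← h1, ← h2]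
  ring

lemma rank_comp_right (m n k i : ℕ) (D : List Bool) (hk : k ≤ i) (hi : i ≤ D.length) :
    rank m n ((D.take k).reverse ++ (D.drop k).reverse) i
      = rank m n D k + rank m n D D.length - rank m n D (D.length - i + k) := by
  have h1 := cright true D k i hk hi
  have h2 := cright false D k i hk hi
  simp only [rank, nSteps, eSteps, List.take_of_length_le (le_refl D.length)]
  zify at h1 h2
  linear_combination (m : ℤ) * h1 - (n : ℤ) * h2

/-- For an `(m,n)`-Dyck path `D` (with `m, n` coprime) with rank set
`R` and maximum rank `M`, the set `M - R` is the rank set of an `(m,n)`-Dyck path. -/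
theorem rank_complement_exists (m n : ℕ) (hm : 0 < m) (hn : 0 < n)
    (hco : Nat.Coprime m n) (D : List Bool) (hD : IsDyck m n D) (M : ℤ)
    (hM : IsGreatest (↑(rankSet m n D) : Set ℤ) M) :
    ∃ D', IsDyck m n D' ∧
      rankSet m n D' = (rankSet m n D).image (fun r => M - r) := by
  
  obtain ⟨⟨hlen, hct⟩, hpos⟩ := hD
  have hM1 := hM.1
  rw [Finset.mem_coe] at hM1
  simp only [rankSet, Finset.mem_image, Finset.mem_range] at hM1
  obtain ⟨k, hkL, hkM⟩ := hM1
  have hDL : D.length = m + n := hlen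
  have hcf : D.count false = m := by have := count_bool_len D; omega
  have hrank0 : rank m n D 0 = 0 := by simp [rank, nSteps, eSteps]
  have hrankL : rank m n D (m + n) = 0 := by
    have ht : D.take (m + n) = D := List.take_of_length_le (by omega)
    simp only [rank, nSteps, eSteps, ht, hct, hcf]
    ring
  have hub : ∀ j ≤ m + n, rank m n D j ≤ M := by
    intro j hj
    rcases lt_or_eq_of_le hj with h | h
    · exact hM.2 (by simp only [Finset.mem_coe, rankSet, Finset.mem_image,
        Finset.mem_range]; exact ⟨j, h, rfl⟩)
    · rw [h, hrankL]
      have h0 : 0 ≤ M := by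
        rw [← hrank0]
        exact hM.2 (by simp only [Finset.mem_coe, rankSet, Finset.mem_image,
          Finset.mem_range]; exact ⟨0, by omega, rfl⟩)
      exact h0
  have hkd : k ≤ D.length := by omega
  refine ⟨(D.take k).reverse ++ (D.drop k).reverse, ⟨⟨?_, ?_⟩, ?_⟩, ?_⟩
  · simp only [List.length_append, List.length_reverse, List.length_take, List.length_drop]
    omega
  · rw [List.count_append, List.count_reverse, List.count_reverse, count_take_drop, hct]
  · intro i hi
    rcases le_or_gt i k with h | h
    · rw [rank_comp_left m n k i D hkd h, hkM]
      have := hub (k - i) (by omega)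
      linarith
    · have hr := rank_comp_right m n k i D (le_of_lt h) (by omega)
      rw [hDL] at hr
      rw [hr, hrankL, hkM]
      have := hub (m + n - i + k) (by omega)
      linarith
  · ext x
    simp only [rankSet, Finset.mem_image, Finset.mem_range]
    constructor
    · rintro ⟨i, hiL, rfl⟩
      rcases le_or_gt i k with h | h
      · refine ⟨rank m n D (k - i), ⟨k - i, by omega, rfl⟩, ?_⟩
        rw [rank_comp_left m n k i D hkd h, hkM]
      · refine ⟨rank m n D (m + n - i + k), ⟨m + n - i + k, by omega, rfl⟩, ?_⟩
        have hr := rank_comp_right m n k i D (le_of_lt h) (by omega)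
        rw [hDL] at hr
        rw [hr, hrankL, hkM]
        ring
    · rintro ⟨r, ⟨j, hjL, rfl⟩, rfl⟩
      by_cases hj0 : j = 0
      · subst hj0
        refine ⟨k, hkL, ?_⟩
        have hr := rank_comp_right m n k k D le_rfl hkd
        rw [hDL] at hr
        have he : m + n - k + k = m + n := by omega
        rw [he] at hr
        rw [hr, hrankL, hrank0, hkM]
        ring
      rcases le_or_gt j k with h | h
      · refine ⟨k - j, by omega, ?_⟩
        rw [rank_comp_left m n k (k - j) D hkd (by omega)]
        have he : k - (k - j) = j := by omega
        rw [he, hkM]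
      · refine ⟨m + n - j + k, by omega, ?_⟩
        have hr := rank_comp_right m n k (m + n - j + k) D (by omega) (by omega)
        rw [hDL] at hr
        have he : m + n - (m + n - j + k) + k = j := by omega
        rw [he] at hr
        rw [hr, hrankL, hkM]
        ring
end

section
/- A partition λ is an n-core (no hook length divisible by n) if and only if its set of first-column hook lengths H is n-flush, i.e., no element of H is divisible by n, and for every h ∈ H with h > n, also h - n ∈ H. -/
open Nat

private lemma sorted_getD {L : List ℕ} (h : L.Pairwise (· ≥ ·)) {k l : ℕ}
    (hkl : k ≤ l) (hl : l < L.length) : L.getD l 0 ≤ L.getD k 0 := by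
  rcases eq_or_lt_of_le hkl with rfl | hkl
  · exact le_refl _
  · have := List.pairwise_iff_get.1 h ⟨k, lt_trans hkl hl⟩ ⟨l, hl⟩ hkl
    rw [List.getD_eq_getElem (hn := hl), List.getD_eq_getElem (hn := lt_trans hkl hl)]
    exact this

private lemma getD_drop' (L : List ℕ) (i m : ℕ) :
    (L.drop i).getD m 0 = L.getD (i + m) 0 := by
  simp [List.getD_eq_getElem?_getD, List.getElem?_drop]

private lemma getD_pos {L : List ℕ} (hL : IsPartition L) {i : ℕ} (hi : i < L.length) :
    0 < L.getD i 0 := by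
  have : L.getD i 0 ∈ L := by
    rw [List.getD_eq_getElem (hn := hi)]; exact List.getElem_mem hi
  exact hL.2 _ this

private lemma hook_zero {L : List ℕ} (hL : IsPartition L) {i : ℕ} (hi : i < L.length) :
    hook L i 0 = L.getD i 0 + (L.length - 1 - i) := by
  unfold hook
  have h1 : (L.drop (i+1)).countP (fun x => decide (0 < x)) = (L.drop (i+1)).length := by
    rw [List.countP_eq_length]
    intro x hx
    simpa using hL.2 x (List.mem_of_mem_drop hx)
  rw [h1, List.length_drop]; omega

private lemma countP_sorted {d : List ℕ} (hd : d.Pairwise (· ≥ ·)) (j : ℕ) :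
    ∀ k < d.length, (j < d.getD k 0 ↔ k < d.countP (fun x => decide (j < x))) := by
  induction d with
  | nil => simp
  | cons x t ih =>
    have hx : ∀ y ∈ t, y ≤ x := fun y hy => (List.pairwise_cons.1 hd).1 y hy
    have ht := (List.pairwise_cons.1 hd).2
    intro k hk
    match k with
    | 0 =>
      simp only [List.getD_cons_zero, List.countP_cons]
      constructor
      · intro hjx
        have : (decide (j < x) : Bool) = true := by simpa using hjx
        simp only [this, if_true]
        omega
      · intro hc
        by_contra hjx
        push_neg at hjx
        have h0 : t.countP (fun x => decide (j < x)) = 0 := by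
          rw [List.countP_eq_zero]
          intro y hy
          have := hx y hy
          simp only [decide_eq_true_eq]
          omega
        have : (decide (j < x) : Bool) = false := by simpa using hjx
        simp [h0, this] at hc
    | k + 1 =>
      simp only [List.getD_cons_succ, List.countP_cons]
      have hk' : k < t.length := by simpa using hk
      rw [ih ht k hk']
      by_cases hjx : j < x
      · have : (decide (j < x) : Bool) = true := by simpa using hjx
        simp only [this, if_true]
        omega
      · have h0 : t.countP (fun x => decide (j < x)) = 0 := by
          rw [List.countP_eq_zero]
          intro y hy
          have := hx y hy
          simp only [decide_eq_true_eq]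
          omega
        have : (decide (j < x) : Bool) = false := by simpa using hjx
        simp [h0, this]

/-- characterization of the leg count for a sorted partition -/
private lemma leg_split {L : List ℕ} (hL : IsPartition L) (i j : ℕ) :
    (L.drop (i+1)).countP (fun x => decide (j < x)) ≤ L.length - 1 - i ∧
    (∀ k, i < k → k < i + 1 + (L.drop (i+1)).countP (fun x => decide (j < x)) →
      k < L.length → j < L.getD k 0) ∧
    (∀ k, i + (L.drop (i+1)).countP (fun x => decide (j < x)) < k → k < L.length →
      L.getD k 0 ≤ j) := by
  set d := L.drop (i+1) with hd
  have hds : d.Pairwise (· ≥ ·) := hL.1.drop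
  have hlen : d.length = L.length - (i+1) := by rw [hd, List.length_drop]
  have key := countP_sorted hds j
  refine ⟨?_, ?_, ?_⟩
  · have := List.countP_le_length (l := d) (p := fun x => decide (j < x))
    omega
  · intro k hik hkc hkL
    have hm : k - (i+1) < d.length := by omega
    have := (key _ hm).2 (by omega)
    rwa [hd, getD_drop', show i + 1 + (k - (i+1)) = k by omega] at this
  · intro k hik hkL
    have hm : k - (i+1) < d.length := by omega
    by_contra hcon
    push_neg at hcon
    have h2 := (key _ hm).1 (by rwa [hd, getD_drop', show i + 1 + (k - (i+1)) = k by omega])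
    omega

private lemma mem_firstColHooks {L : List ℕ} {x : ℕ} :
    x ∈ firstColHooks L ↔ ∃ i, i < L.length ∧ hook L i 0 = x := by
  simp [firstColHooks]

/-- Lemma A : the difference between the first-column hook and a hook in the
same row is never a first-column hook. -/
private lemma sub_hook_not_mem {L : List ℕ} (hL : IsPartition L) {i j : ℕ}
    (hi : i < L.length) (hj : j < L.getD i 0) :
    hook L i 0 - hook L i j ∉ firstColHooks L := by
  set a := L.length with ha
  set c := (L.drop (i+1)).countP (fun x => decide (j < x)) with hc
  obtain ⟨hc1, hc2, hc3⟩ := leg_split hL i j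
  have hhj : hook L i j = L.getD i 0 - j + c := rfl
  have hh0 := hook_zero hL hi
  intro hmem
  obtain ⟨k, hk, hhk⟩ := mem_firstColHooks.1 hmem
  have hhk0 := hook_zero hL hk
  rcases le_or_gt (i + 1 + c) k with hcase | hcase
  · -- k ≥ i+1+c : L_k ≤ j, so hook k 0 < t
    have hLk := hc3 k (by omega) hk
    omega
  · -- k ≤ i+c : L_k ≥ L_{i+c} > j, so hook k 0 > t
    have hic : i + c < a := by omega
    have hLic : j < L.getD (i + c) 0 := by
      rcases Nat.eq_zero_or_pos c with h0 | h0
      · simpa [h0] using hj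
      · exact hc2 (i + c) (by omega) (by omega) (by omega)
    have hmono : L.getD (i + c) 0 ≤ L.getD k 0 := sorted_getD hL.1 (by omega) hic
    omega

/-- Lemma B : every non-hook value below the first-column hook is realised
as a complementary hook in the row. -/
private lemma exists_hook {L : List ℕ} (hL : IsPartition L) {i t : ℕ}
    (hi : i < L.length) (ht : t < hook L i 0) (htH : t ∉ firstColHooks L) :
    ∃ j, j < L.getD i 0 ∧ hook L i j + t = hook L i 0 := by
  set a := L.length with ha
  have hh0 := hook_zero hL hi
  have hPa : i < a ∧ (a ≤ a ∨ hook L a 0 ≤ t) := ⟨hi, Or.inl le_rfl⟩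
  set P := fun k => i < k ∧ (a ≤ k ∨ hook L k 0 ≤ t) with hP
  have hex : ∃ k, P k := ⟨a, hPa⟩
  set k0 := Nat.find hex with hk0
  have hk0P : P k0 := Nat.find_spec hex
  have hk0le : k0 ≤ a := Nat.find_le hPa
  have hk0i : i < k0 := hk0P.1
  have hmin : ∀ k, i < k → k < k0 → k < a ∧ t < hook L k 0 := by
    intro k hik hkk0
    have hnk : ¬ (i < k ∧ (a ≤ k ∨ hook L k 0 ≤ t)) := Nat.find_min hex hkk0
    push_neg at hnk
    exact hnk hik
  -- t ≥ a - k0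
  have htlow : a - k0 ≤ t := by
    rcases eq_or_lt_of_le hk0le with heq | hk0a
    · omega
    · have hk0a' : k0 < a := hk0a
      have hle : hook L k0 0 ≤ t := by
        rcases hk0P.2 with h | h
        · omega
        · exact h
      have := hook_zero hL hk0a'
      have := getD_pos hL hk0a'
      omega
  set j := t - (a - k0) with hj
  -- first-column hook of row k0 - 1 exceeds t
  have hprev : t < hook L (k0 - 1) 0 := by
    rcases eq_or_lt_of_le (Nat.succ_le_of_lt hk0i) with heq | hlt
    · rw [show k0 - 1 = i by omega]; exact ht
    · exact (hmin (k0 - 1) (by omega) (by omega)).2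
  have hprevlen : k0 - 1 < a := by omega
  have hprev0 := hook_zero hL hprevlen
  have hLprev : j < L.getD (k0 - 1) 0 := by omega
  have hjLi : j < L.getD i 0 := lt_of_lt_of_le hLprev (sorted_getD hL.1 (by omega) hprevlen)
  -- compute the leg count
  set c := (L.drop (i+1)).countP (fun x => decide (j < x)) with hc
  obtain ⟨hc1, hc2, hc3⟩ := leg_split hL i j
  have hcge : k0 - 1 - i ≤ c := by
    rcases eq_or_lt_of_le (Nat.succ_le_of_lt hk0i) with heq | hlt
    · omega
    · by_contra hcon
      push_neg at hcon
      have := hc3 (k0 - 1) (by omega) hprevlen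
      omega
  have hcle : c ≤ k0 - 1 - i := by
    rcases eq_or_lt_of_le hk0le with heq | hk0a
    · omega
    · by_contra hcon
      push_neg at hcon
      have h2 := hc2 k0 (by omega) (by omega) hk0a
      have hle : hook L k0 0 ≤ t := by rcases hk0P.2 with h | h; omega; exact h
      have hne : hook L k0 0 ≠ t := by
        intro he
        exact htH (mem_firstColHooks.2 ⟨k0, hk0a, he⟩)
      have := hook_zero hL hk0a
      omega
  refine ⟨j, hjLi, ?_⟩
  have hhj : hook L i j = L.getD i 0 - j + c := rfl
  omega

/-- Lemma C : flush sets are closed under subtracting multiples of n. -/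
private lemma flush_sub {n : ℕ} {H : Finset ℕ}
    (hF : (∀ h ∈ H, ¬ (n ∣ h)) ∧ ∀ h ∈ H, n < h → h - n ∈ H) :
    ∀ q h, h ∈ H → q * n < h → h - q * n ∈ H := by
  intro q
  induction q with
  | zero => simpa using fun h hh _ => hh
  | succ q ih =>
    intro h hh hqn
    have h1 : h - q * n ∈ H := ih h hh (by nlinarith)
    have h2 : n < h - q * n := by
      have : (q + 1) * n = q * n + n := by ring
      omega
    have := hF.2 _ h1 h2
    have heq : h - q * n - n = h - (q + 1) * n := by
      have : (q + 1) * n = q * n + n := by ring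
      omega
    rwa [heq] at this

/-- A partition is an `n`-core iff its set of first-column hook
lengths is `n`-flush. -/
theorem core_iff_flush (n : ℕ) (hn : 0 < n) (L : List ℕ) (hL : IsPartition L) :
    IsCore n L ↔ IsFlush n (firstColHooks L) := by
  constructor
  · intro hcore
    constructor
    · intro h hh
      obtain ⟨i, hi, rfl⟩ := mem_firstColHooks.1 hh
      exact hcore i hi 0 (getD_pos hL hi)
    · intro h hh hnh
      obtain ⟨i, hi, rfl⟩ := mem_firstColHooks.1 hh
      by_contra hcon
      obtain ⟨j, hj, hjh⟩ := exists_hook hL hi (t := hook L i 0 - n) (by omega) hcon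
      have heq : hook L i j = n := by omega
      exact hcore i hi j hj (heq ▸ dvd_refl n)
  · intro hF i hi j hj hdvd
    have hh0 := hook_zero hL hi
    have hle : hook L i j ≤ hook L i 0 := by
      unfold hook
      have hcc : (L.drop (i+1)).countP (fun x => decide (j < x)) ≤
          (L.drop (i+1)).countP (fun x => decide (0 < x)) := by
        apply List.countP_mono_left
        intro x hx h
        simp only [decide_eq_true_eq] at *
        omega
      omega
    have hpos : 0 < hook L i j := by
      unfold hook
      omega
    obtain ⟨q, hq⟩ := hdvd
    have hmem : hook L i 0 ∈ firstColHooks L := mem_firstColHooks.2 ⟨i, hi, rfl⟩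
    rcases eq_or_lt_of_le hle with heq | hlt
    · exact hF.1 _ hmem (by rw [← heq]; exact ⟨q, hq⟩)
    · have hqn : q * n < hook L i 0 := by rw [mul_comm, ← hq]; exact hlt
      have ht : hook L i 0 - q * n ∈ firstColHooks L := flush_sub hF q _ hmem hqn
      have ht' : hook L i 0 - hook L i j ∈ firstColHooks L := by
        rwa [hq, mul_comm n q]
      exact sub_hook_not_mem hL hi hj ht'
end
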